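/- Define d : ℕ → ℚ by d(0) = 0, d(1) = 1, d(2N) = d(N), d(2N+1) = (d(N) + d(N+1) + 1)/2, and set S'(N) = d(1) + ⋯ + d(N−1) + d(N)/2. Then S'(2N) = 2·S'(N) + N/2 for all N ≥ 1. -/

import Mathlib

theorem vdc_partial_sum_recurrence (d : ℕ → ℚ)
    (h0 : d 0 = 0) (h1 : d 1 = 1)
    (heven : ∀ N : ℕ, d (2 * N) = d N)
    (hodd : ∀ N : ℕ, d (2 * N + 1) = (d N + d (N + 1) + 1) / 2)
    (S' : ℕ → ℚ) (hS' : ∀ N : ℕ, S' N = (∑ k ∈ Finset.Ico 1 N, d k) + d N / 2)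
    (N : ℕ) (hN : 1 ≤ N) :
    S' (2 * N) = 2 * S' N + N / 2 := by
  clear hN
  have key : ∀ M : ℕ, (∑ k ∈ Finset.Ico 1 M, d k) = ∑ k ∈ Finset.range M, d k := by
    intro M
    cases M with
    | zero => simp
    | succ m =>
      symm
      rw [Finset.range_eq_Ico, Finset.sum_eq_sum_Ico_succ_bot (Nat.succ_pos m), h0, zero_add]
  induction N with
  | zero => simp [hS', h0]
  | succ n ih =>
    have e1 : 2 * (n + 1) = (2 * n + 1) + 1 := by ring
    have e2 : 2 * n + 1 + 1 = 2 * (n + 1) := by ring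
    rw [hS', hS', key, key] at ih ⊢
    rw [heven n] at ih
    rw [e1, Finset.sum_range_succ, Finset.sum_range_succ, Finset.sum_range_succ,
      heven n, hodd n, e2, heven (n + 1)]
    push_cast
    linarith [ih]
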